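/- Let P be an n-element poset. A labeling L of P is in the image of the extended promotion map ∂ : Λ(P) → Λ(P) (where Λ(P) is the set of all labelings of P) if and only if L⁻¹(n) is a maximal element of P. -/

import Mathlib

open scoped Classical

noncomputable section

abbrev Labeling (P : Type*) [Fintype P] : Type _ := P ≃ Fin (Fintype.card P)

variable {P : Type*} [Fintype P] [PartialOrder P]

def IsLinearExt (L : Labeling P) : Prop := ∀ x y : P, x ≤ y → L x ≤ L y

def lSucc (L : Labeling P) (v : P)
    (h : (Finset.univ.filter fun y => v < y).Nonempty) : P :=
  L.symm (((Finset.univ.filter fun y => v < y).image L).min' (h.image _))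

lemma lt_lSucc (L : Labeling P) (v : P)
    (h : (Finset.univ.filter fun y => v < y).Nonempty) : v < lSucc L v h := by
  have hmem := Finset.min'_mem ((Finset.univ.filter fun y => v < y).image L) (h.image _)
  obtain ⟨y, hy, hLy⟩ := Finset.mem_image.mp hmem
  have heq : lSucc L v h = y := by
    unfold lSucc
    rw [← hLy, Equiv.symm_apply_apply]
  rw [heq]
  exact (Finset.mem_filter.mp hy).2

def promChainFrom (L : Labeling P) (v : P) : List P :=
  if h : (Finset.univ.filter fun y => v < y).Nonempty then
    v :: promChainFrom L (lSucc L v h)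
  else [v]
termination_by (Finset.univ.filter fun y => v < y).card
decreasing_by
  apply Finset.card_lt_card
  refine (Finset.ssubset_iff_of_subset ?_).mpr ?_
  · intro z hz
    simp only [Finset.mem_filter, Finset.mem_univ, true_and] at *
    exact lt_trans (lt_lSucc L v h) hz
  · exact ⟨lSucc L v h, by simp [lt_lSucc L v h], by simp⟩

def promote (L : Labeling P) : Labeling P :=
  if h : Nonempty P then
    ((List.formPerm (promChainFrom L (L.symm ⟨0, @Fintype.card_pos P _ h⟩))).trans L).trans
      (finRotate (Fintype.card P)).symm
  else L

/-- The label of `x` under `L`, as an integer in `{1, …, n}`. -/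
def labelOf (L : Labeling P) (x : P) : ℕ := (L x : ℕ) + 1

/-- The largest `a ∈ {0, …, n}` such that for all `j ∈ {n−a+1, …, n}`, the set
`{x ∈ P : j ≤ L(x) ≤ n}` is an upper order ideal of `P`. -/
def frozenA (L : Labeling P) : ℕ :=
  sSup {a : ℕ | a ≤ Fintype.card P ∧
    ∀ j, Fintype.card P - a + 1 ≤ j → j ≤ Fintype.card P →
      IsUpperSet {x : P | j ≤ labelOf L x ∧ labelOf L x ≤ Fintype.card P}}

/-- `x` is frozen with respect to `L` if `n − a + 1 ≤ L(x) ≤ n`, where `a` is as in `frozenA`. -/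
def IsFrozen (L : Labeling P) (x : P) : Prop :=
  Fintype.card P - frozenA L + 1 ≤ labelOf L x

/-- A labeling of an `n`-element poset is tangled if `n ≥ 2` and `∂^{n−2}(L)` is
not a linear extension. -/
def IsTangled (L : Labeling P) : Prop :=
  2 ≤ Fintype.card P ∧ ¬ IsLinearExt (promote^[Fintype.card P - 2] L)

/-- A labeling of an `n`-element poset is `k`-untangled if `n ≥ k + 2` and
`∂^{n−k−2}(L)` is not a linear extension. -/
def IsUntangled (k : ℕ) (L : Labeling P) : Prop :=
  k + 2 ≤ Fintype.card P ∧ ¬ IsLinearExt (promote^[Fintype.card P - k - 2] L)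

/-- The comparability graph of a poset. -/
def compGraph (P : Type*) [PartialOrder P] : SimpleGraph P where
  Adj x y := x ≠ y ∧ (x ≤ y ∨ y ≤ x)
  symm := by
    refine ⟨fun x y hxy => ?_⟩
    exact ⟨hxy.1.symm, hxy.2.symm⟩
  loopless := by
    refine ⟨fun x hx => ?_⟩
    exact hx.1 rfl

/-- The standardization of an injective map from a finite type into a linear order:
the unique relabeling by `{1, …, n}` with the same relative order of values. -/
def standardize {R β : Type*} [Fintype R] [LinearOrder β]
    (f : R → β) (hf : Function.Injective f) : R ≃ Fin (Fintype.card R) :=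
  have hcard : (Finset.univ.image f).card = Fintype.card R := by
    rw [Finset.card_image_of_injective _ hf, Finset.card_univ]
  (Equiv.ofBijective (fun x => (⟨f x, by simp⟩ : ↥(Finset.univ.image f)))
    (by
      rw [Fintype.bijective_iff_injective_and_card]
      refine ⟨fun a b hab => hf (congrArg Subtype.val hab), ?_⟩
      rw [Fintype.card_coe, hcard])).trans
    ((Finset.univ.image f).orderIsoOfFin hcard).symm.toEquiv

/-- The toggle operator `τ_{k+1}`: it swaps the labels `k+1` and `k+2` (i.e. the
`Fin`-labels `k` and `k+1`) unless `L⁻¹(k+1) <_P L⁻¹(k+2)`. -/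
def toggle (L : Labeling P) (k : ℕ) : Labeling P :=
  if h : k + 1 < Fintype.card P then
    if L.symm ⟨k, Nat.lt_of_succ_lt h⟩ < L.symm ⟨k + 1, h⟩ then L
    else L.trans (Equiv.swap ⟨k, Nat.lt_of_succ_lt h⟩ ⟨k + 1, h⟩)
  else L

/-- An element `x` is `L`-golden if every element strictly above it has a larger label. -/
def IsGolden (L : Labeling P) (x : P) : Prop := ∀ y : P, x < y → L x < L y

/-- The largest label `n` of an `n`-element poset, as an element of `Fin n`. -/
def topFin (P : Type*) [Fintype P] [Nonempty P] : Fin (Fintype.card P) :=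
  ⟨Fintype.card P - 1, Nat.sub_lt Fintype.card_pos Nat.one_pos⟩

lemma promChainFrom_eq_cons (L : Labeling P) (v : P) :
    ∃ t, promChainFrom L v = v :: t := by
  rw [promChainFrom]; split <;> exact ⟨_, rfl⟩

lemma isMax_of_getLast?_promChainFrom (L : Labeling P) (v : P) :
    ∀ m, (promChainFrom L v).getLast? = some m → IsMax m := by
  induction v using promChainFrom.induct (L := L) with
  | case1 x hx ih =>
    intro m hm
    rw [promChainFrom, dif_pos hx] at hm
    obtain ⟨t, ht⟩ := promChainFrom_eq_cons L (lSucc L x hx)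
    rw [ht, List.getLast?_cons_cons, ← ht] at hm
    exact ih m hm
  | case2 x hx =>
    intro m hm
    rw [promChainFrom, dif_neg hx] at hm
    simp only [List.getLast?_singleton, Option.some.injEq] at hm
    subst hm
    intro b hb
    rcases hb.lt_or_eq with hlt | heq
    · exact absurd ⟨b, by simp [hlt]⟩ hx
    · exact heq.ge

lemma finRotate_mk (n : ℕ) (hn : 0 < n) (hn' : n - 1 < n) :
    finRotate n ⟨n - 1, hn'⟩ = ⟨0, hn⟩ := by
  cases n with
  | zero => omega
  | succ m =>
    have h : (⟨m + 1 - 1, hn'⟩ : Fin (m + 1)) = Fin.last m := rfl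
    rw [h, finRotate_last]
    exact Fin.ext (by simp)

lemma isMax_symm_promote [Nonempty P] (L' : Labeling P) :
    IsMax ((promote L').symm (topFin P)) := by
  have hne : Nonempty P := ‹_›
  have hp : 0 < Fintype.card P := Fintype.card_pos
  have hrot : finRotate (Fintype.card P) (topFin P) = ⟨0, hp⟩ := finRotate_mk _ hp _
  rw [promote, dif_pos hne]
  simp only [Equiv.symm_trans_apply, Equiv.symm_symm]
  rw [hrot]
  set v₀ := L'.symm ⟨0, hp⟩ with hv₀
  obtain ⟨t, ht⟩ := promChainFrom_eq_cons L' v₀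
  have hlast : (promChainFrom L' v₀).getLast? =
      some ((v₀ :: t).getLast (List.cons_ne_nil _ _)) := by
    rw [ht]; exact List.getLast?_eq_getLast _
  have key : (List.formPerm (promChainFrom L' v₀)).symm v₀ =
      (v₀ :: t).getLast (List.cons_ne_nil _ _) := by
    rw [ht, Equiv.symm_apply_eq]
    exact (List.formPerm_apply_getLast v₀ t).symm
  rw [key]
  exact isMax_of_getLast?_promChainFrom L' v₀ _ hlast

/-- A labeling `L` of `P` is in the image of extended promotion if
and only if `L⁻¹(n)` is a maximal element of `P`. -/
theorem mem_image_promote_iff [Nonempty P] (L : Labeling P) :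
    (∃ L' : Labeling P, promote L' = L) ↔ IsMax (L.symm (topFin P)) := by
  have hne : Nonempty P := ‹_›
  have hp : 0 < Fintype.card P := Fintype.card_pos
  have hrot : finRotate (Fintype.card P) (topFin P) = ⟨0, hp⟩ := finRotate_mk _ hp _
  constructor
  · rintro ⟨L', rfl⟩
    exact isMax_symm_promote L'
  · intro hmax
    set rot := finRotate (Fintype.card P) with hrotdef
    refine ⟨L.trans rot, ?_⟩
    set L' := L.trans rot with hL'
    have h0 : ∀ hq : 0 < Fintype.card P, L'.symm ⟨0, hq⟩ = L.symm (topFin P) := by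
      intro hq
      simp only [hL', Equiv.symm_trans_apply]
      congr 1
      rw [Equiv.symm_apply_eq]
      have : (⟨0, hq⟩ : Fin (Fintype.card P)) = ⟨0, hp⟩ := rfl
      rw [this, ← hrot]
    have hempty : ∀ hq : 0 < Fintype.card P,
        ¬ (Finset.univ.filter fun y => L'.symm ⟨0, hq⟩ < y).Nonempty := by
      intro hq ⟨y, hy⟩
      rw [Finset.mem_filter, h0 hq] at hy
      exact lt_irrefl _ (lt_of_lt_of_le hy.2 (hmax (le_of_lt hy.2)))
    have hchain : ∀ hq : 0 < Fintype.card P,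
        promChainFrom L' (L'.symm ⟨0, hq⟩) = [L'.symm ⟨0, hq⟩] := by
      intro hq
      rw [promChainFrom, dif_neg (hempty hq)]
    rw [promote, dif_pos hne, hchain, List.formPerm_singleton]
    ext x
    simp [hL', hrotdef]
end
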